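/- Let U be a unitary operator on G and set A = i(1+U) and B = 1−U. Then A B* = B A* and the operator M^{A,B} on G ⊕ G is boundedly invertible (bijective with bounded inverse); in particular the pair (A,B) is normalized. -/

import Mathlib

open ContinuousLinearMap

variable {G : Type*} [NormedAddCommGroup G] [InnerProductSpace ℂ G] [CompleteSpace G]

/-- The operator `M^{A,B}` on `G × G`, `(x₁,x₂) ↦ (A x₁ - B x₂, B x₁ + A x₂)`. -/
noncomputable def MAB (A B : G →L[ℂ] G) : (G × G) →L[ℂ] (G × G) :=
  ((A.comp (fst ℂ G G)) - (B.comp (snd ℂ G G))).prod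
    ((B.comp (fst ℂ G G)) + (A.comp (snd ℂ G G)))

/-- The linear relation `Λ^{A,B} = {(x₁,x₂) : A x₁ = B x₂}`. -/
def LambdaAB (A B : G →L[ℂ] G) : Submodule ℂ (G × G) where
  carrier := {p | A p.1 = B p.2}
  add_mem' := by
    intro a b ha hb
    simp only [Set.mem_setOf_eq] at *
    simp [ha, hb]
  zero_mem' := by simp
  smul_mem' := by
    intro c p hp
    simp only [Set.mem_setOf_eq] at *
    simp [hp]

/-- The adjoint of a linear relation. -/
def relAdjoint (Λ : Submodule ℂ (G × G)) : Submodule ℂ (G × G) where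
  carrier := {p | ∀ q ∈ Λ, (inner ℂ p.1 q.2 : ℂ) = inner ℂ p.2 q.1}
  add_mem' := by
    intro a b ha hb q hq
    simp [inner_add_left, ha q hq, hb q hq]
  zero_mem' := by
    intro q hq; simp
  smul_mem' := by
    intro c p hp q hq
    simp [inner_smul_left, hp q hq]

/-- A linear relation is self-adjoint if it equals its adjoint. -/
def IsSelfAdjointRel (Λ : Submodule ℂ (G × G)) : Prop := relAdjoint Λ = Λ

/-- A bounded operator is boundedly invertible if it has a bounded two-sided inverse. -/
def IsBoundedlyInvertible {E F : Type*} [NormedAddCommGroup E] [NormedSpace ℂ E]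
    [NormedAddCommGroup F] [NormedSpace ℂ F] (T : E →L[ℂ] F) : Prop :=
  ∃ T' : F →L[ℂ] E, (∀ x, T' (T x) = x) ∧ (∀ y, T (T' y) = y)

/-- The pair `(A,B)` is normalized if `A B* = B A*` and `M^{A,B}` is boundedly invertible. -/
noncomputable def IsNormalized (A B : G →L[ℂ] G) : Prop :=
  A ∘L adjoint B = B ∘L adjoint A ∧ IsBoundedlyInvertible (MAB A B)

/-- Composition of two `MAB` operators is again an `MAB` operator. -/
lemma MAB_comp (A B C D : G →L[ℂ] G) :
    (MAB C D) ∘L (MAB A B) = MAB (C * A - D * B) (D * A + C * B) := by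
  ext x <;>
    simp [MAB, ContinuousLinearMap.mul_apply, map_sub, map_add,
      ContinuousLinearMap.sub_apply, ContinuousLinearMap.add_apply] <;>
    abel

/-- For unitary `U`, the pair `A = i(1+U)`, `B = 1-U` satisfies
`A B* = B A*` and `M^{A,B}` is boundedly invertible, i.e. `(A,B)` is normalized. -/
theorem cayley_pair_isNormalized (U : G →L[ℂ] G) (hU : U ∈ unitary (G →L[ℂ] G)) :
    (Complex.I • (1 + U)) ∘L adjoint (1 - U) = (1 - U) ∘L adjoint (Complex.I • (1 + U)) ∧
      IsBoundedlyInvertible (MAB (Complex.I • (1 + U)) (1 - U)) := by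
  have hVU : (adjoint U) * U = 1 := by
    have h := hU.1; rwa [ContinuousLinearMap.star_eq_adjoint] at h
  have hUV : U * adjoint U = 1 := by
    have h := hU.2; rwa [ContinuousLinearMap.star_eq_adjoint] at h
  set V := adjoint U with hV
  set A : G →L[ℂ] G := Complex.I • (1 + U) with hA
  set B : G →L[ℂ] G := 1 - U with hB
  have hadjB : adjoint B = 1 - V := by
    rw [hB, ← ContinuousLinearMap.star_eq_adjoint, star_sub, star_one,
      ContinuousLinearMap.star_eq_adjoint, ← hV]
  have hadjA : adjoint A = (-Complex.I) • (1 + V) := by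
    rw [hA, ← ContinuousLinearMap.star_eq_adjoint, star_smul, star_add, star_one,
      ContinuousLinearMap.star_eq_adjoint, ← hV, Complex.star_def, Complex.conj_I]
  constructor
  · show A * adjoint B = B * adjoint A
    rw [hadjA, hadjB, hA, hB]
    simp only [smul_mul_assoc, mul_smul_comm, add_mul, mul_add, sub_mul, mul_sub,
      one_mul, mul_one, hUV, hVU]
    match_scalars <;> ring_nf <;> simp [Complex.I_sq] <;> norm_num
  · set C : G →L[ℂ] G := (-(Complex.I) / 4) • (1 + V) with hC
    set D : G →L[ℂ] G := (4⁻¹ : ℂ) • (V - 1) with hD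
    have hCA : C * A - D * B = 1 := by
      rw [hC, hD, hA, hB]
      simp only [smul_mul_assoc, mul_smul_comm, add_mul, mul_add, sub_mul, mul_sub,
        one_mul, mul_one, hUV, hVU]
      match_scalars <;> ring_nf <;> simp [Complex.I_sq] <;> norm_num
    have hDA : D * A + C * B = 0 := by
      rw [hC, hD, hA, hB]
      simp only [smul_mul_assoc, mul_smul_comm, add_mul, mul_add, sub_mul, mul_sub,
        one_mul, mul_one, hUV, hVU]
      match_scalars <;> ring_nf <;> simp [Complex.I_sq] <;> norm_num
    have hAC : A * C - B * D = 1 := by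
      rw [hC, hD, hA, hB]
      simp only [smul_mul_assoc, mul_smul_comm, add_mul, mul_add, sub_mul, mul_sub,
        one_mul, mul_one, hUV, hVU]
      match_scalars <;> ring_nf <;> simp [Complex.I_sq] <;> norm_num
    have hBC : B * C + A * D = 0 := by
      rw [hC, hD, hA, hB]
      simp only [smul_mul_assoc, mul_smul_comm, add_mul, mul_add, sub_mul, mul_sub,
        one_mul, mul_one, hUV, hVU]
      match_scalars <;> ring_nf <;> simp [Complex.I_sq] <;> norm_num
    refine ⟨MAB C D, ?_, ?_⟩
    · intro x
      have h := congrFun (congrArg DFunLike.coe (MAB_comp A B C D)) x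
      rw [ContinuousLinearMap.comp_apply] at h
      rw [h, hCA, hDA]
      simp [MAB]
    · intro y
      have h := congrFun (congrArg DFunLike.coe (MAB_comp C D A B)) y
      rw [ContinuousLinearMap.comp_apply] at h
      rw [h, hAC, hBC]
      simp [MAB]
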